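/- Fix an odd integer l ≥ 3. For every N ≥ 1 and k ∈ {0,1,...,l-2}, |p(k,N) − ((1 + (-1)^{k+N})/l) · 2^{N+1} cos^N(π/l) sin(π/l) sin((k+1)π/l)| ≤ 2^N |cos(2π/l)|^N. -/

import Mathlib

open Real Finset

lemma sum_cos_zero (l t : ℕ) (h1 : 1 ≤ t) (h2 : t < l) :
    ∑ s ∈ Finset.range l, Real.cos (s * (2 * t * Real.pi / l)) = 0 := by
  have hl0 : 0 < l := Nat.lt_of_lt_of_le Nat.zero_lt_one (h1.trans h2.le)
  have hl : (0:ℝ) < l := by exact_mod_cast hl0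
  set a : ℝ := 2 * t * Real.pi / l with ha
  set z : ℂ := Complex.exp (a * Complex.I) with hz
  have hzs : ∀ s : ℕ, Real.cos (s * a) = (z ^ s).re := by
    intro s
    rw [hz, ← Complex.exp_nat_mul]
    rw [show (s : ℂ) * (↑a * Complex.I) = (↑(s * a) : ℂ) * Complex.I by push_cast; ring]
    rw [Complex.exp_ofReal_mul_I_re]
  have hzl : z ^ l = 1 := by
    rw [hz, ← Complex.exp_nat_mul]
    rw [show (l:ℂ) * (↑a * Complex.I) = t * (2 * Real.pi * Complex.I) by
      rw [ha]; push_cast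
      have hlc : (l:ℂ) ≠ 0 := by exact_mod_cast hl.ne'
      field_simp]
    rw [show ((t:ℂ) * (2 * Real.pi * Complex.I)) = ((t:ℤ):ℂ) * (2 * Real.pi * Complex.I) by push_cast; ring, Complex.exp_int_mul_two_pi_mul_I]
  have hzne : z ≠ 1 := by
    intro h
    have hre : Real.cos a = 1 := by
      have := congrArg Complex.re h
      rwa [hz, Complex.exp_ofReal_mul_I_re] at this
    have hπ := Real.pi_pos
    have h0 : 0 < a := by rw [ha]; positivity
    have h2a : a < 2 * Real.pi := by
      rw [ha, div_lt_iff₀ hl]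
      have : (t:ℝ) < l := by exact_mod_cast h2
      nlinarith
    have := (Real.cos_eq_one_iff_of_lt_of_lt (by linarith) h2a).1 hre
    linarith
  have : ∑ s ∈ Finset.range l, (z ^ s) = 0 := by
    have := geom_sum_eq hzne l
    rw [this, hzl]; simp
  calc ∑ s ∈ Finset.range l, Real.cos (s * a)
      = ∑ s ∈ Finset.range l, (z ^ s).re := by simp [hzs]
    _ = (∑ s ∈ Finset.range l, z ^ s).re := by rw [Complex.re_sum]
    _ = 0 := by rw [this]; simp

lemma cos_even_sum (l t : ℕ) (h1 : 1 ≤ t) (h2 : t < l) :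
    ∑ s ∈ Finset.Ico 1 l, Real.cos (s * (2 * t) * (Real.pi / l)) = -1 := by
  have h0 := sum_cos_zero l t h1 h2
  have hsplit : ∑ s ∈ Finset.range l, Real.cos (s * (2 * t * Real.pi / l))
      = Real.cos 0 + ∑ s ∈ Finset.Ico 1 l, Real.cos (s * (2 * t * Real.pi / l)) := by
    rw [Finset.range_eq_Ico, Finset.sum_eq_sum_Ico_succ_bot (by omega : 0 < l)]
    norm_num
  have h3 : ∑ s ∈ Finset.Ico 1 l, Real.cos (s * (2 * t * Real.pi / l)) = -1 := by
    rw [hsplit] at h0; simp only [Real.cos_zero] at h0; linarith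
  rw [← h3]
  apply Finset.sum_congr rfl; intro s _; congr 1 <;> (push_cast; ring)

lemma cos_odd_sum (l m : ℕ) (hl : 3 ≤ l) (hlodd : Odd l) (hm : Odd m) :
    ∑ s ∈ Finset.Ico 1 l, Real.cos (s * m * (Real.pi / l)) = 0 := by
  apply Finset.sum_involution (fun s _ => l - s)
  · intro s hs
    simp only [Finset.mem_Ico] at hs
    have h1 : (((l - s : ℕ) : ℝ)) = (l : ℝ) - s := by
      have : s ≤ l := hs.2.le
      exact Nat.cast_sub this
    have hlne : (l:ℝ) ≠ 0 := by positivity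
    have harg : ((l - s : ℕ) : ℝ) * m * (Real.pi / l) = m * Real.pi - s * m * (Real.pi / l) := by
      rw [h1]; field_simp
    rw [harg, Real.cos_nat_mul_pi_sub, hm.neg_one_pow]
    ring
  · intro s hs _
    simp only [Finset.mem_Ico] at hs
    intro h
    obtain ⟨j, hj⟩ := hlodd
    omega
  · intro s hs
    simp only [Finset.mem_Ico] at hs ⊢
    omega
  · intro s hs
    simp only [Finset.mem_Ico] at hs
    omega

lemma base_sum (l k : ℕ) (hl : 3 ≤ l) (hodd : Odd l) (hk : k ≤ l - 2) :
    ∑ s ∈ Finset.Ico 1 l, Real.sin (s * (Real.pi/l)) * Real.sin (s * (k+1) * (Real.pi/l))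
      = if k = 0 then (l : ℝ) / 2 else 0 := by
  have key : ∀ s : ℕ, Real.sin (s * (Real.pi/l)) * Real.sin (s * (k+1) * (Real.pi/l))
      = (Real.cos (s * k * (Real.pi/l)) - Real.cos (s * (k+2) * (Real.pi/l))) / 2 := by
    intro s
    have e1 : (s:ℝ) * k * (Real.pi/l) = s * (k+1) * (Real.pi/l) - s * (Real.pi/l) := by ring
    have e2 : (s:ℝ) * (k+2) * (Real.pi/l) = s * (k+1) * (Real.pi/l) + s * (Real.pi/l) := by ring
    rw [e1, e2, Real.cos_sub, Real.cos_add]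
    ring
  rw [Finset.sum_congr rfl (fun s _ => key s)]
  rw [← Finset.sum_div, Finset.sum_sub_distrib]
  rcases Nat.eq_zero_or_pos k with hk0 | hk0
  · subst hk0
    simp only [if_pos rfl]
    have c0 : ∑ s ∈ Finset.Ico 1 l, Real.cos ((s:ℝ) * (0:ℕ) * (Real.pi/l)) = (l:ℝ) - 1 := by
      simp only [Nat.cast_zero, mul_zero, zero_mul, Real.cos_zero]
      rw [Finset.sum_const, Nat.card_Ico]
      have : 1 ≤ l := by omega
      rw [nsmul_eq_mul, Nat.cast_sub this]
      push_cast; ring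
    have c2 : ∑ s ∈ Finset.Ico 1 l, Real.cos ((s:ℝ) * ((0:ℕ)+2) * (Real.pi/l)) = -1 := by
      have h := cos_even_sum l 1 le_rfl (by omega)
      rw [← h]; try (apply Finset.sum_congr rfl; intro s _; congr 1 <;> (push_cast; ring))
    rw [show ((0:ℕ):ℝ) = (0:ℝ) by norm_num] at *
    rw [c0, c2]
    norm_num
  · have hkl : k = 0 → False := by omega
    rw [if_neg (by omega)]
    rcases Nat.even_or_odd k with hke | hko
    · obtain ⟨t, ht⟩ := hke
      have ht1 : 1 ≤ t := by omega
      have ht2 : t < l := by omega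
      have ht3 : t + 1 < l := by
        have : k + 2 ≤ l := by omega
        omega
      have c1 : ∑ s ∈ Finset.Ico 1 l, Real.cos ((s:ℝ) * k * (Real.pi/l)) = -1 := by
        have h := cos_even_sum l t ht1 ht2
        rw [← h]; try (apply Finset.sum_congr rfl; intro s _; congr 1 <;> (push_cast [ht]; ring))
      have c2 : ∑ s ∈ Finset.Ico 1 l, Real.cos ((s:ℝ) * (k+2) * (Real.pi/l)) = -1 := by
        have h := cos_even_sum l (t+1) (by omega) ht3
        rw [← h]; try (apply Finset.sum_congr rfl; intro s _; congr 1 <;> (push_cast [ht]; ring))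
      rw [c1, c2]; ring
    · have c1 := cos_odd_sum l k hl hodd hko
      have c2 := cos_odd_sum l (k+2) hl hodd (by exact hko.add_even (by norm_num))
      push_cast at c2
      rw [c1, c2]; ring

lemma sinsq_sum (l m : ℕ) (hl : 3 ≤ l) (h1 : 1 ≤ m) (h2 : m < l) :
    ∑ s ∈ Finset.Ico 1 l, Real.sin (s * m * (Real.pi/l)) ^ 2 = (l : ℝ) / 2 := by
  have key : ∀ s : ℕ, Real.sin ((s:ℝ) * m * (Real.pi/l)) ^ 2
      = (1 - Real.cos ((s:ℝ) * (2*m) * (Real.pi/l))) / 2 := by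
    intro s
    have : (s:ℝ) * (2*m) * (Real.pi/l) = 2 * ((s:ℝ) * m * (Real.pi/l)) := by push_cast; ring
    rw [this, Real.cos_two_mul]
    have := Real.sin_sq_add_cos_sq ((s:ℝ) * m * (Real.pi/l))
    nlinarith
  rw [Finset.sum_congr rfl (fun s _ => key s)]
  rw [← Finset.sum_div, Finset.sum_sub_distrib, Finset.sum_const, Nat.card_Ico]
  have c2 : ∑ s ∈ Finset.Ico 1 l, Real.cos ((s:ℝ) * (2*m) * (Real.pi/l)) = -1 := by
    have h := cos_even_sum l m h1 h2
    rw [← h]; try (apply Finset.sum_congr rfl; intro s _; congr 1 <;> (push_cast; ring))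
  rw [c2]
  have h1l : 1 ≤ l := by omega
  rw [nsmul_eq_mul, Nat.cast_sub h1l]
  push_cast; ring

/-- The tilting multiplicity `p(k,N)`, defined by the recursion `p(k,0) = [k = 0]`,
`p(k,N) = p(k-1,N-1) + p(k+1,N-1)` for `0 ≤ k ≤ l-3`, `p(l-2,N) = p(l-3,N-1)`,
with the convention `p(-1,·) = 0`. -/
def p (l : ℕ) : ℕ → ℕ → ℕ
  | 0, k => if k = 0 then 1 else 0
  | N + 1, k =>
    if k + 2 = l then (if 3 ≤ l then p l N (l - 3) else 0)
    else if k = 0 then p l N 1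
    else p l N (k - 1) + p l N (k + 1)

noncomputable def fsum (l N m : ℕ) : ℝ :=
  ∑ s ∈ Finset.Ico 1 l,
    Real.cos (s * (Real.pi/l)) ^ N * Real.sin (s * (Real.pi/l)) * Real.sin (s * m * (Real.pi/l))

lemma fsum_zero (l N : ℕ) : fsum l N 0 = 0 := by
  unfold fsum; simp

lemma fsum_top (l N : ℕ) (hl : 0 < l) : fsum l N l = 0 := by
  unfold fsum
  apply Finset.sum_eq_zero
  intro s _
  have : (s:ℝ) * l * (Real.pi/l) = s * Real.pi := by
    have : (l:ℝ) ≠ 0 := by positivity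
    field_simp
  rw [this, Real.sin_nat_mul_pi, mul_zero]

lemma fsum_rec (l N m : ℕ) (hm : 1 ≤ m) :
    fsum l (N+1) m = (fsum l N (m+1) + fsum l N (m-1)) / 2 := by
  unfold fsum
  rw [← Finset.sum_add_distrib, Finset.sum_div]
  apply Finset.sum_congr rfl
  intro s _
  have hc : ((m - 1 : ℕ) : ℝ) = (m:ℝ) - 1 := by rw [Nat.cast_sub hm]; norm_num
  have e1 : (s:ℝ) * (m+1:ℕ) * (Real.pi/l) = s * m * (Real.pi/l) + s * (Real.pi/l) := by
    push_cast; ring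
  have e2 : (s:ℝ) * (m-1:ℕ) * (Real.pi/l) = s * m * (Real.pi/l) - s * (Real.pi/l) := by
    rw [hc]; ring
  rw [e1, e2, Real.sin_add, Real.sin_sub]
  ring

lemma p_eq (l : ℕ) (hl : 3 ≤ l) (hodd : Odd l) :
    ∀ N k, k ≤ l - 2 → (p l N k : ℝ) = 2^(N+1) / l * fsum l N (k+1) := by
  intro N
  induction N with
  | zero =>
    intro k hk
    have hbase : fsum l 0 (k+1) = if k = 0 then (l:ℝ)/2 else 0 := by
      rw [← base_sum l k hl hodd hk]
      unfold fsum
      apply Finset.sum_congr rfl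
      intro s _
      push_cast
      ring
    have hlne : (l:ℝ) ≠ 0 := by positivity
    rw [hbase, p]
    rcases Nat.eq_zero_or_pos k with rfl | hk0
    · simp only [if_pos rfl]
      simp only [if_true, Nat.cast_one, one_mul, zero_add, pow_one]
      field_simp
    · rw [if_neg (by omega), if_neg (by omega)]; simp
  | succ N ih =>
    intro k hk
    have hl0 : 0 < l := by omega
    by_cases hcase : k + 2 = l
    · rw [p, if_pos hcase, if_pos hl]
      have hk1 : k + 1 = l - 1 := by omega
      have hrec := fsum_rec l N (k+1) (by omega)
      have htop : k + 1 + 1 = l := by omega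
      rw [htop, fsum_top l N hl0] at hrec
      have h3 : k + 1 - 1 = (l - 3) + 1 := by omega
      rw [h3] at hrec
      rw [hrec, ih (l-3) (by omega)]
      ring
    · by_cases hk0 : k = 0
      · subst hk0
        rw [p, if_neg hcase, if_pos rfl]
        have hrec := fsum_rec l N 1 le_rfl
        rw [show (1:ℕ) - 1 = 0 from rfl, fsum_zero] at hrec
        rw [hrec, ih 1 (by omega)]
        ring
      · rw [p, if_neg hcase, if_neg hk0]
        have hrec := fsum_rec l N (k+1) (by omega)
        have e1 : k + 1 + 1 = (k+1) + 1 := rfl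
        have e2 : k + 1 - 1 = (k-1) + 1 := by omega
        rw [e2] at hrec
        rw [hrec, Nat.cast_add, ih (k-1) (by omega), ih (k+1) (by omega)]
        ring

lemma cos_bound (l s : ℕ) (hs1 : 2 ≤ s) (hs2 : s + 2 ≤ l) :
    |Real.cos (s * (Real.pi/l))| ≤ |Real.cos (2 * Real.pi / l)| := by
  have hl4 : 4 ≤ l := by omega
  have hlr : (0:ℝ) < l := by positivity
  have hπ := Real.pi_pos
  set a := 2 * Real.pi / l with ha
  set x := (s:ℝ) * (Real.pi/l) with hx
  have ha0 : 0 < a := by rw [ha]; positivity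
  have hsr : (2:ℝ) ≤ s := by exact_mod_cast hs1
  have hslr : (s:ℝ) + 2 ≤ l := by exact_mod_cast hs2
  have hax : a ≤ x := by
    rw [ha, hx]
    have hpl : (0:ℝ) < Real.pi / l := by positivity
    have h2 : 2 * Real.pi / (l:ℝ) = 2 * (Real.pi/l) := by ring
    rw [h2]
    nlinarith
  have hxa : x ≤ Real.pi - a := by
    rw [ha, hx]
    have h1 : (s:ℝ) * (Real.pi/l) + 2 * (Real.pi/l) ≤ l * (Real.pi/l) := by
      have : (0:ℝ) < Real.pi / l := by positivity
      nlinarith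
    have h2 : (l:ℝ) * (Real.pi/l) = Real.pi := by field_simp
    have h3 : 2 * Real.pi / (l:ℝ) = 2 * (Real.pi / l) := by ring
    linarith [h1, h2, h3.ge, h3.le]
  have ha2 : a ≤ Real.pi / 2 := by
    rw [ha, div_le_div_iff₀ hlr (by norm_num)]
    have : (4:ℝ) ≤ l := by exact_mod_cast hl4
    nlinarith
  have hca : 0 ≤ Real.cos a := Real.cos_nonneg_of_mem_Icc ⟨by linarith, ha2⟩
  rw [abs_of_nonneg hca]
  rcases le_or_gt x (Real.pi/2) with h | h
  · rw [abs_of_nonneg (Real.cos_nonneg_of_mem_Icc ⟨by linarith, h⟩)]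
    exact Real.cos_le_cos_of_nonneg_of_le_pi ha0.le (by linarith) hax
  · have hcx : Real.cos x ≤ 0 :=
      Real.cos_nonpos_of_pi_div_two_le_of_le h.le (by linarith)
    rw [abs_of_nonpos hcx, ← Real.cos_pi_sub]
    exact Real.cos_le_cos_of_nonneg_of_le_pi ha0.le (by linarith) (by linarith)

theorem stmt_18 (l : ℕ) (hl : 3 ≤ l) (hodd : Odd l) (N k : ℕ) (hN : 1 ≤ N)
    (hk : k ≤ l - 2) :
    |(p l N k : ℝ) -
        ((1 + (-1 : ℝ) ^ (k + N)) / l) * 2 ^ (N + 1) * Real.cos (Real.pi / l) ^ N *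
          Real.sin (Real.pi / l) * Real.sin ((k + 1) * Real.pi / l)| ≤
      2 ^ N * |Real.cos (2 * Real.pi / l)| ^ N := by
  have hl0 : 0 < l := by omega
  have hlr : (0:ℝ) < l := by positivity
  have hπ := Real.pi_pos
  set θ := Real.pi / l with hθ
  set g : ℕ → ℝ := fun s =>
    Real.cos (s*θ) ^ N * Real.sin (s*θ) * Real.sin (s * ((k+1:ℕ):ℝ) * θ) with hg
  have hfg : fsum l N (k+1) = ∑ s ∈ Finset.Ico 1 l, g s := rfl
  set R : ℝ := ∑ s ∈ Finset.Ico 2 (l-1), g s with hR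
  -- splitting
  have hsplit : fsum l N (k+1) = g 1 + R + g (l-1) := by
    rw [hfg, Finset.sum_eq_sum_Ico_succ_bot (by omega : 1 < l)]
    have hll : l = (l-1) + 1 := by omega
    rw [show Finset.Ico 2 l = Finset.Ico 2 ((l-1)+1) by rw [← hll]]
    rw [Finset.sum_Ico_succ_top (by omega : 2 ≤ l - 1)]
    ring
  -- value of g 1
  have hg1 : g 1 = Real.cos θ ^ N * Real.sin θ * Real.sin ((k+1) * θ) := by
    rw [hg]; push_cast; ring_nf
  -- value of g (l-1)
  have hcast : ((l - 1 : ℕ) : ℝ) = (l:ℝ) - 1 := by rw [Nat.cast_sub (by omega : 1 ≤ l)]; norm_num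
  have harg1 : ((l-1:ℕ):ℝ) * θ = Real.pi - θ := by
    rw [hcast, hθ]; field_simp
  have harg2 : ((l-1:ℕ):ℝ) * ((k+1:ℕ):ℝ) * θ = ((k+1:ℕ):ℝ) * Real.pi - ((k+1:ℕ):ℝ) * θ := by
    rw [hcast, hθ]; field_simp
  have hgl : g (l-1) = (-1:ℝ)^(k+N) * (Real.cos θ ^ N * Real.sin θ * Real.sin ((k+1) * θ)) := by
    rw [hg]
    simp only []
    rw [harg1, harg2, Real.cos_pi_sub, Real.sin_pi_sub, Real.sin_nat_mul_pi_sub]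
    push_cast
    rw [neg_pow, pow_succ, pow_add]
    ring
  -- main identity
  have hp := p_eq l hl hodd N k hk
  have hmain : (p l N k : ℝ) -
      ((1 + (-1 : ℝ) ^ (k + N)) / l) * 2 ^ (N + 1) * Real.cos (Real.pi / l) ^ N *
        Real.sin (Real.pi / l) * Real.sin ((k + 1) * Real.pi / l)
      = 2^(N+1) / l * R := by
    rw [hp, hsplit, hg1, hgl]
    have : Real.sin (((k:ℝ) + 1) * Real.pi / l) = Real.sin (((k:ℝ)+1) * θ) := by
      rw [hθ]; ring_nf
    rw [this, hθ]
    ring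
  rw [hmain, abs_mul, abs_of_pos (by positivity : (0:ℝ) < 2^(N+1) / l)]
  -- bound on |R|
  have hsinsq1 : ∑ s ∈ Finset.Ico 1 l, Real.sin ((s:ℝ) * θ)^2 = (l:ℝ)/2 := by
    have h := sinsq_sum l 1 hl le_rfl (by omega)
    rw [← h]; apply Finset.sum_congr rfl; intro s _; norm_num; rw [hθ]
  have hsinsq2 : ∑ s ∈ Finset.Ico 1 l, Real.sin ((s:ℝ) * ((k+1:ℕ):ℝ) * θ)^2 = (l:ℝ)/2 :=
    sinsq_sum l (k+1) hl (by omega) (by omega)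
  set B : ℕ → ℝ := fun s => (Real.sin ((s:ℝ)*θ)^2 + Real.sin ((s:ℝ) * ((k+1:ℕ):ℝ) * θ)^2)/2
    with hB
  have hRbound : |R| ≤ |Real.cos (2*Real.pi/l)|^N * ((l:ℝ)/2) := by
    calc |R| ≤ ∑ s ∈ Finset.Ico 2 (l-1), |g s| := Finset.abs_sum_le_sum_abs _ _
      _ ≤ ∑ s ∈ Finset.Ico 2 (l-1), |Real.cos (2*Real.pi/l)|^N * B s := by
          apply Finset.sum_le_sum
          intro s hs
          simp only [Finset.mem_Ico] at hs
          have h1 : |Real.cos ((s:ℝ)*θ)|^N ≤ |Real.cos (2*Real.pi/l)|^N := by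
            apply pow_le_pow_left₀ (abs_nonneg _)
            exact cos_bound l s hs.1 (by omega)
          have h2 : |Real.sin ((s:ℝ)*θ) * Real.sin ((s:ℝ) * ((k+1:ℕ):ℝ) * θ)| ≤ B s := by
            rw [hB, abs_mul]
            simp only []
            nlinarith [sq_nonneg (|Real.sin ((s:ℝ)*θ)| - |Real.sin ((s:ℝ) * ((k+1:ℕ):ℝ) * θ)|),
              sq_abs (Real.sin ((s:ℝ)*θ)), sq_abs (Real.sin ((s:ℝ) * ((k+1:ℕ):ℝ) * θ)),
              abs_nonneg (Real.sin ((s:ℝ)*θ)), abs_nonneg (Real.sin ((s:ℝ) * ((k+1:ℕ):ℝ) * θ))]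
          have hgabs : |g s| = |Real.cos ((s:ℝ)*θ)|^N * |Real.sin ((s:ℝ)*θ) * Real.sin ((s:ℝ) * ((k+1:ℕ):ℝ) * θ)| := by
            rw [hg]
            simp only []
            rw [mul_assoc, abs_mul, abs_pow]
          rw [hgabs]
          exact mul_le_mul h1 h2 (abs_nonneg _) (by positivity)
      _ ≤ ∑ s ∈ Finset.Ico 1 l, |Real.cos (2*Real.pi/l)|^N * B s := by
          apply Finset.sum_le_sum_of_subset_of_nonneg
          · exact Finset.Ico_subset_Ico (by omega) (by omega)
          · intro s _ _
            have : 0 ≤ B s := by rw [hB]; positivity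
            positivity
      _ = |Real.cos (2*Real.pi/l)|^N * ((l:ℝ)/2) := by
          rw [← Finset.mul_sum]
          congr 1
          rw [hB]
          simp only []
          rw [← Finset.sum_div, Finset.sum_add_distrib, hsinsq1, hsinsq2]
          ring
  calc 2^(N+1)/(l:ℝ) * |R| ≤ 2^(N+1)/(l:ℝ) * (|Real.cos (2*Real.pi/l)|^N * ((l:ℝ)/2)) := by
        apply mul_le_mul_of_nonneg_left hRbound (by positivity)
    _ = 2 ^ N * |Real.cos (2 * Real.pi / l)| ^ N := by
        field_simp
        ring
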